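/- Let d ≥ 2 and let G ≤ Aut(T_d) be a weakly branch group acting on the boundary X = ∂T_d with the uniform Bernoulli measure μ. Then for every finite word v there exists g ∈ G such that supp(g) ⊆ X_v and μ(supp(g)) ≥ (1/d)·μ(X_v). -/

import Mathlib

open MeasureTheory
open scoped symmDiff ENNReal Pointwise

/-- Vertices of the `d`-regular rooted tree: finite words over the alphabet `Fin d`. -/
abbrev Word (d : ℕ) := List (Fin d)

/-- A permutation of the vertex set is a tree automorphism if it preserves word length and the
prefix relation. -/
def IsTreeAut {d : ℕ} (g : Equiv.Perm (Word d)) : Prop :=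
  (∀ v : Word d, (g v).length = v.length) ∧
  ∀ v w : Word d, v <+: w ↔ g v <+: g w

/-- The boundary of the `d`-regular rooted tree: infinite sequences over `Fin d`. -/
abbrev Boundary (d : ℕ) := ℕ → Fin d

/-- The length-`n` prefix of a boundary point, as a word. -/
def prefixWord {d : ℕ} (x : Boundary d) (n : ℕ) : Word d := List.ofFn fun i : Fin n => x i

/-- `act` realizes the boundary action of the tree automorphisms in `G`: for `g ∈ G`, the
length-`n` prefix of `act g x` is `g` applied to the length-`n` prefix of `x`, for every `n`. -/
def IsBoundaryAction {d : ℕ} (G : Subgroup (Equiv.Perm (Word d)))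
    (act : Equiv.Perm (Word d) → Boundary d → Boundary d) : Prop :=
  ∀ g ∈ G, ∀ (x : Boundary d) (n : ℕ), prefixWord (act g x) n = g (prefixWord x n)

/-- The cylinder of all boundary points having the word `v` as a prefix. -/
def cylinder {d : ℕ} (v : Word d) : Set (Boundary d) :=
  {x : Boundary d | prefixWord x v.length = v}

/-- The uniform Bernoulli measure: every cylinder on a word of length `n` has measure `d⁻ⁿ`. -/
def IsUniformBernoulli {d : ℕ} (μ : Measure (Boundary d)) : Prop :=
  ∀ v : Word d, μ (cylinder v) = ((d : ℝ≥0∞)⁻¹) ^ v.length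

/-- `G` acts transitively on the words of each fixed length. -/
def LevelTransitive {d : ℕ} (G : Subgroup (Equiv.Perm (Word d))) : Prop :=
  ∀ v w : Word d, v.length = w.length → ∃ g ∈ G, g v = w

/-- The rigid stabilizer of the word `v`: elements of `G` fixing every word that does not have
`v` as a prefix. -/
def ristSet {d : ℕ} (G : Subgroup (Equiv.Perm (Word d))) (v : Word d) :
    Set (Equiv.Perm (Word d)) :=
  {g : Equiv.Perm (Word d) | g ∈ G ∧ ∀ w : Word d, ¬ v <+: w → g w = w}

/-- `G` is weakly branch: level transitive with all rigid stabilizers nontrivial. -/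
def IsWeaklyBranch {d : ℕ} (G : Subgroup (Equiv.Perm (Word d))) : Prop :=
  LevelTransitive G ∧ ∀ v : Word d, ∃ g ∈ ristSet G v, g ≠ 1

/-- The rigid stabilizer of level `k`: the subgroup generated by the rigid stabilizers of all
words of length `k`. -/
def ristLevel {d : ℕ} (G : Subgroup (Equiv.Perm (Word d))) (k : ℕ) :
    Subgroup (Equiv.Perm (Word d)) :=
  Subgroup.closure (⋃ v ∈ {v : Word d | v.length = k}, ristSet G v)

/-- `G` is branch: level transitive with all level rigid stabilizers of finite index in `G`. -/
def IsBranch {d : ℕ} (G : Subgroup (Equiv.Perm (Word d))) : Prop :=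
  LevelTransitive G ∧ ∀ k : ℕ, (ristLevel G k).relIndex G ≠ 0

/-- The fixed-point set of `g` on the boundary, relative to the boundary action `act`. -/
def fixedSet {d : ℕ} (act : Equiv.Perm (Word d) → Boundary d → Boundary d)
    (g : Equiv.Perm (Word d)) : Set (Boundary d) :=
  {x : Boundary d | act g x = x}

/-- The support of `g` on the boundary: points moved by `g`. -/
def suppSet {d : ℕ} (act : Equiv.Perm (Word d) → Boundary d → Boundary d)
    (g : Equiv.Perm (Word d)) : Set (Boundary d) :=
  {x : Boundary d | act g x ≠ x}

section Aux
variable {d : ℕ}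

lemma prefixWord_length (x : Boundary d) (n : ℕ) : (prefixWord x n).length = n := by
  simp [prefixWord]

lemma prefixWord_succ (x : Boundary d) (n : ℕ) :
    prefixWord x (n+1) = prefixWord x n ++ [x n] := by
  rw [prefixWord, List.ofFn_succ', List.concat_eq_append]
  simp only [prefixWord, Fin.coe_castSucc, Fin.val_last]

lemma prefixWord_prefix (x : Boundary d) {j j' : ℕ} (h : j ≤ j') :
    prefixWord x j <+: prefixWord x j' := by
  induction j', h using Nat.le_induction with
  | base => exact List.prefix_refl _
  | succ n hn ih => exact ih.trans (by rw [prefixWord_succ]; exact List.prefix_append _ _)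

lemma boundary_ext {x y : Boundary d} (h : ∀ n, prefixWord x n = prefixWord y n) : x = y := by
  funext i
  have h2 : (fun j : Fin (i+1) => x j) = fun j : Fin (i+1) => y j :=
    List.ofFn_inj.mp (h (i+1))
  simpa using congrFun h2 ⟨i, i.lt_succ_self⟩

lemma prefix_eq_of_length {p q y : Word d} (h1 : p <+: y) (h2 : q <+: y)
    (hl : p.length = q.length) : p = q :=
  (List.prefix_of_prefix_length_le h1 h2 hl.le).eq_of_length hl

lemma mem_cylinder {x : Boundary d} {w : Word d} :
    x ∈ _root_.cylinder w ↔ prefixWord x w.length = w :=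
  Iff.rfl

lemma cylinder_eq (w : Word d) :
    _root_.cylinder w = ⋂ i : Fin w.length, {x : Boundary d | x i = w.get i} := by
  ext x
  simp only [_root_.cylinder, Set.mem_setOf_eq, Set.mem_iInter]
  constructor
  · intro h i
    have hi : (i:ℕ) < (prefixWord x w.length).length := by simp [prefixWord]
    have h3 := List.getElem_of_eq h hi
    simpa [prefixWord, List.get_eq_getElem] using h3
  · intro h
    apply List.ext_getElem
    · simp [prefixWord]
    · intro i h1 h2
      simpa [prefixWord, List.get_eq_getElem] using h ⟨i, h2⟩

lemma measurableSet_cylinder (w : Word d) : MeasurableSet (_root_.cylinder w) := by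
  rw [cylinder_eq]
  refine MeasurableSet.iInter fun i => ?_
  have : {x : Boundary d | x (i:ℕ) = w.get i} = (fun x : Boundary d => x (i:ℕ)) ⁻¹' {w.get i} := by
    ext x; simp [Set.mem_preimage]
  rw [this]
  exact measurable_pi_apply (i : ℕ) (measurableSet_singleton (w.get i))

lemma cylinder_disjoint {w w' : Word d} (hl : w.length = w'.length) (hne : w ≠ w') :
    Disjoint (_root_.cylinder w) (_root_.cylinder w') := by
  rw [Set.disjoint_left]
  intro x hx hx'
  exact hne ((mem_cylinder.mp hx).symm.trans (by rw [hl]; exact mem_cylinder.mp hx'))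

lemma cylinder_mono {w y : Word d} (h : w <+: y) :
    _root_.cylinder y ⊆ _root_.cylinder w := by
  intro x hx
  have hxy : prefixWord x y.length = y := mem_cylinder.mp hx
  have h1 : prefixWord x w.length <+: y := hxy ▸ prefixWord_prefix x h.length_le
  exact mem_cylinder.mpr (prefix_eq_of_length h1 h (prefixWord_length x _))

lemma exists_snoc_of_prefix {p y : Word d} (h : p <+: y) (hl : y.length = p.length + 1) :
    ∃ c, y = p ++ [c] := by
  obtain ⟨r, rfl⟩ := h
  have hr : r.length = 1 := by simpa using hl
  obtain ⟨c, rfl⟩ := List.length_eq_one_iff.mp hr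
  exact ⟨c, rfl⟩

lemma list_prod_fix (l : List (Equiv.Perm (Word d))) (x : Word d)
    (h : ∀ g ∈ l, g x = x) : l.prod x = x := by
  induction l with
  | nil => rfl
  | cons g l ih =>
    rw [List.prod_cons, Equiv.Perm.mul_apply,
      ih (fun g' hg' => h g' (List.mem_cons_of_mem _ hg')), h g List.mem_cons_self]

lemma perm_apply_inv_self' (e : Equiv.Perm (Word d)) (x : Word d) : e (e⁻¹ x) = x :=
  (Equiv.eq_symm_apply e).mp rfl

lemma perm_inv_apply_self' (e : Equiv.Perm (Word d)) (x : Word d) : e⁻¹ (e x) = x :=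
  Equiv.Perm.inv_eq_iff_eq.mpr rfl

end Aux

section Aux2
variable {d : ℕ} {G : Subgroup (Equiv.Perm (Word d))}
  {act : Equiv.Perm (Word d) → Boundary d → Boundary d}

lemma moved_subset_supp (hact : IsBoundaryAction G act) {g : Equiv.Perm (Word d)}
    (hg : g ∈ G) {w : Word d} (hw : g w ≠ w) :
    _root_.cylinder w ⊆ suppSet act g := by
  intro x hx heq
  have h1 : prefixWord (act g x) w.length = g (prefixWord x w.length) := hact g hg x _
  rw [heq, mem_cylinder.mp hx] at h1
  exact hw h1.symm

lemma supp_subset_cylinder (hact : IsBoundaryAction G act) {g : Equiv.Perm (Word d)}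
    (hg : g ∈ G) {v : Word d} (hfix : ∀ w : Word d, ¬ v <+: w → g w = w) :
    suppSet act g ⊆ _root_.cylinder v := by
  intro x hx
  by_contra hxv
  apply hx
  apply boundary_ext
  intro j
  rw [hact g hg x j]
  apply hfix
  intro hpre
  rcases le_or_gt v.length j with hle | hlt
  · have h1 : prefixWord x v.length <+: prefixWord x j := prefixWord_prefix x hle
    exact hxv (_root_.mem_cylinder.mpr
      (prefix_eq_of_length h1 hpre (by rw [prefixWord_length])))
  · have := hpre.length_le
    rw [prefixWord_length] at this
    omega

end Aux2

/-- For a weakly branch group `G` on the `d`-regular rooted tree and any vertex `v`, there is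
`g ∈ G` supported inside the cylinder `X_v` and moving at least a `1/d` fraction of it. -/
theorem exists_support_in_cylinder_of_weaklyBranch
    {d : ℕ} (hd : 2 ≤ d) (G : Subgroup (Equiv.Perm (Word d)))
    (hG : ∀ g ∈ G, IsTreeAut g) (hWB : IsWeaklyBranch G)
    (act : Equiv.Perm (Word d) → Boundary d → Boundary d) (hact : IsBoundaryAction G act)
    (μ : Measure (Boundary d)) [IsProbabilityMeasure μ] (hμ : IsUniformBernoulli μ)
    (v : Word d) :
    ∃ g ∈ G, suppSet act g ⊆ cylinder v ∧
      (d : ℝ≥0∞)⁻¹ * μ (cylinder v) ≤ μ (suppSet act g) := by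
  classical
  obtain ⟨hLT, hRist⟩ := hWB
  obtain ⟨h0, ⟨h0G, h0fix⟩, h0ne⟩ := hRist v
  -- a moved word of minimal length
  have hex : ∃ k : ℕ, ∃ w : Word d, w.length = k ∧ h0 w ≠ w := by
    by_contra hc
    push_neg at hc
    exact h0ne (Equiv.ext fun w => by simpa using hc w.length w rfl)
  obtain ⟨w, hwlen, hwmoved⟩ := Nat.find_spec hex
  have hmin : ∀ w' : Word d, w'.length < Nat.find hex → h0 w' = w' := by
    intro w' hw'
    by_contra hc
    exact Nat.find_min hex hw' ⟨w', rfl, hc⟩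
  -- the minimal length exceeds v.length
  have hvlt : v.length < Nat.find hex := by
    by_contra hk
    push_neg at hk
    have hfixshort : ∀ w' : Word d, w'.length ≤ v.length → h0 w' = w' := by
      intro w' hw'
      rcases eq_or_ne w' v with rfl | hne
      · by_contra hvv
        have hz : ¬ w' <+: h0 w' := by
          intro hp
          exact hvv (hp.eq_of_length ((hG h0 h0G).1 w').symm).symm
        have h2 := h0fix _ hz
        exact hvv (h0.injective h2)
      · apply h0fix
        intro hp
        have hle := hp.length_le
        rcases lt_or_eq_of_le hw' with hlt | heq
        · omega
        · exact hne (hp.eq_of_length heq.symm).symm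
    exact hwmoved (hfixshort w (by omega))
  obtain ⟨m, hm⟩ : ∃ m, Nat.find hex = m + 1 := ⟨Nat.find hex - 1, by omega⟩
  have hnm : v.length ≤ m := by omega
  have hwne : w ≠ [] := by
    intro h
    rw [h] at hwlen
    simp at hwlen
    omega
  have hw_eq : w.dropLast ++ [w.getLast hwne] = w := List.dropLast_append_getLast hwne
  set u := w.dropLast with hu
  set a := w.getLast hwne with ha
  have hulen : u.length = m := by rw [hu, List.length_dropLast, hwlen]; omega
  have hvw : v <+: w := by
    by_contra hc
    exact hwmoved (h0fix w hc)
  have hvu : v <+: u :=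
    List.prefix_of_prefix_length_le hvw (by rw [← hw_eq]; exact List.prefix_append _ _)
      (by rw [hulen]; exact hnm)
  -- conjugating elements, one for each word of length m extending v
  have hlev : ∀ t : Fin (m - v.length) → Fin d,
      ∃ f ∈ G, f w = (v ++ List.ofFn t) ++ [a] := by
    intro t
    exact hLT w _ (by simp [hwlen, List.length_append]; omega)
  choose f hfG hfw using hlev
  set hh : (Fin (m - v.length) → Fin d) → Equiv.Perm (Word d) :=
    fun t => f t * h0 * (f t)⁻¹ with hhdef
  have hhG : ∀ t, hh t ∈ G := fun t =>
    G.mul_mem (G.mul_mem (hfG t) h0G) (G.inv_mem (hfG t))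
  have hhapply : ∀ t (w' : Word d), hh t w' = f t (h0 ((f t)⁻¹ w')) := fun t w' => rfl
  have hlen_inv : ∀ t (w' : Word d), ((f t)⁻¹ w').length = w'.length := by
    intro t w'
    exact (hG _ (G.inv_mem (hfG t))).1 w'
  have hhfix : ∀ t (w' : Word d), w'.length ≤ m → hh t w' = w' := by
    intro t w' hw'
    rw [hhapply, hmin _ (by rw [hlen_inv]; omega), perm_apply_inv_self']
  have hftv : ∀ t, f t v = v := by
    intro t
    have h1 : f t v <+: (v ++ List.ofFn t) ++ [a] := by
      rw [← hfw t]
      exact ((hG _ (hfG t)).2 v w).mp hvw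
    have h2 : v <+: (v ++ List.ofFn t) ++ [a] := by
      rw [List.append_assoc]
      exact List.prefix_append _ _
    exact prefix_eq_of_length h1 h2 ((hG _ (hfG t)).1 v)
  have hhrist : ∀ t (w' : Word d), ¬ v <+: w' → hh t w' = w' := by
    intro t w' hw'
    have hnp : ¬ v <+: (f t)⁻¹ w' := by
      intro hp
      apply hw'
      have h3 := ((hG _ (hfG t)).2 v ((f t)⁻¹ w')).mp hp
      rwa [hftv, perm_apply_inv_self'] at h3
    rw [hhapply, h0fix _ hnp, perm_apply_inv_self']
  have hhmoves : ∀ t, hh t ((v ++ List.ofFn t) ++ [a]) ≠ (v ++ List.ofFn t) ++ [a] := by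
    intro t heq
    rw [← hfw t, hhapply, perm_inv_apply_self'] at heq
    exact hwmoved ((f t).injective heq)
  -- the enumeration list and the products
  set L : List (Fin (m - v.length) → Fin d) := Finset.univ.toList with hLdef
  have hLnd : L.Nodup := Finset.nodup_toList _
  have hLmem : ∀ t, t ∈ L := fun t => by simp [hLdef]
  set P : ((Fin (m - v.length) → Fin d) → Bool) → Equiv.Perm (Word d) :=
    fun ε => (L.map fun t => if ε t then hh t else 1).prod with hPdef
  have hPG : ∀ ε, P ε ∈ G := by
    intro ε
    apply Subgroup.list_prod_mem
    intro x hx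
    simp only [List.mem_map] at hx
    obtain ⟨t, -, rfl⟩ := hx
    by_cases hε : ε t <;> simp [hε, hhG t, G.one_mem]
  have hPfix : ∀ ε (w' : Word d), w'.length ≤ m → P ε w' = w' := by
    intro ε w' hw'
    apply list_prod_fix
    intro g hg
    simp only [List.mem_map] at hg
    obtain ⟨t, -, rfl⟩ := hg
    by_cases hε : ε t <;> simp [hε, hhfix t w' hw']
  have hPrist : ∀ ε (w' : Word d), ¬ v <+: w' → P ε w' = w' := by
    intro ε w' hw'
    apply list_prod_fix
    intro g hg
    simp only [List.mem_map] at hg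
    obtain ⟨t, -, rfl⟩ := hg
    by_cases hε : ε t <;> simp [hε, hhrist t w' hw']
  -- a tree automorphism fixing a word permutes its children
  have hchild : ∀ (g : Equiv.Perm (Word d)), g ∈ G → ∀ (p : Word d) (c : Fin d), g p = p →
      ∃ c' : Fin d, g (p ++ [c]) = p ++ [c'] := by
    intro g hg p c hp
    have h1 : p <+: g (p ++ [c]) := by
      have h2 := ((hG g hg).2 p (p ++ [c])).mp (List.prefix_append _ _)
      rwa [hp] at h2
    have h2 : (g (p ++ [c])).length = p.length + 1 := by
      rw [(hG g hg).1]
      simp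
    exact exists_snoc_of_prefix h1 h2
  -- the pairing claim
  have hpair : ∀ (t : Fin (m - v.length) → Fin d) (ε : (Fin (m - v.length) → Fin d) → Bool),
      (∀ c : Fin d, P ε ((v ++ List.ofFn t) ++ [c]) = (v ++ List.ofFn t) ++ [c]) →
      (∀ c : Fin d, P (Function.update ε t (!ε t)) ((v ++ List.ofFn t) ++ [c])
        = (v ++ List.ofFn t) ++ [c]) →
      False := by
    intro t ε hfix1 hfix2
    set ε' := Function.update ε t (!ε t) with hε'def
    obtain ⟨L₁, L₂, hLsplit⟩ := List.append_of_mem (hLmem t)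
    have hnd2 : (L₁ ++ t :: L₂).Nodup := hLsplit ▸ hLnd
    have ht1 : t ∉ L₁ := fun hmem =>
      (List.disjoint_of_nodup_append hnd2) hmem List.mem_cons_self
    have ht2 : t ∉ L₂ := (List.nodup_cons.mp hnd2.of_append_right).1
    have hmapeq : ∀ (L' : List (Fin (m - v.length) → Fin d)), t ∉ L' →
        (L'.map fun s => if ε' s then hh s else 1)
          = (L'.map fun s => if ε s then hh s else 1) := by
      intro L' htL'
      apply List.map_congr_left
      intro s hs
      have hne : s ≠ t := fun h => htL' (h ▸ hs)
      rw [hε'def, Function.update_of_ne hne]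
    set A := (L₁.map fun s => if ε s then hh s else 1).prod with hAdef
    set B := (L₂.map fun s => if ε s then hh s else 1).prod with hBdef
    have hPdec1 : P ε = A * ((if ε t then hh t else 1) * B) := by
      rw [hPdef]
      simp only []
      rw [hLsplit, List.map_append, List.map_cons, List.prod_append, List.prod_cons]
    have hPdec2 : P ε' = A * ((if ε' t then hh t else 1) * B) := by
      rw [hPdef]
      simp only []
      rw [hLsplit, List.map_append, List.map_cons, List.prod_append, List.prod_cons,
        hmapeq L₁ ht1, hmapeq L₂ ht2]
    -- B is in G and fixes short words
    have hBG : B ∈ G := by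
      apply Subgroup.list_prod_mem
      intro x hx
      simp only [List.mem_map] at hx
      obtain ⟨s, -, rfl⟩ := hx
      by_cases hε : ε s <;> simp [hε, hhG s, G.one_mem]
    have hBfix : ∀ (w' : Word d), w'.length ≤ m → B w' = w' := by
      intro w' hw'
      apply list_prod_fix
      intro g hg
      simp only [List.mem_map] at hg
      obtain ⟨s, -, rfl⟩ := hg
      by_cases hε : ε s <;> simp [hε, hhfix s w' hw']
    have hplen : (v ++ List.ofFn t).length = m := by
      simp [List.length_append]
      omega
    have hBp : B (v ++ List.ofFn t) = v ++ List.ofFn t := hBfix _ (le_of_eq hplen)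
    -- key: hh t fixes all B-images of children
    have hkey : ∀ c : Fin d,
        hh t (B ((v ++ List.ofFn t) ++ [c])) = B ((v ++ List.ofFn t) ++ [c]) := by
      intro c
      have e1 := hfix1 c
      have e2 := hfix2 c
      rw [hPdec1] at e1
      rw [hPdec2] at e2
      simp only [Equiv.Perm.mul_apply] at e1 e2
      have e3 : (if ε t then hh t else 1) (B ((v ++ List.ofFn t) ++ [c]))
          = (if ε' t then hh t else 1) (B ((v ++ List.ofFn t) ++ [c])) :=
        A.injective (e1.trans e2.symm)
      have hεt : ε' t = !ε t := Function.update_self _ _ _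
      by_cases hc : ε t
      · rw [if_pos hc, hεt, hc] at e3
        simpa using e3
      · rw [if_neg hc, hεt] at e3
        simp only [hc, Bool.not_false, if_pos] at e3
        simpa using e3.symm
    -- B permutes the children, so hh t fixes all children, contradiction
    choose β hβ using fun c : Fin d => hchild B hBG (v ++ List.ofFn t) c hBp
    have hβinj : Function.Injective β := by
      intro c c' hcc
      have h4 : B ((v ++ List.ofFn t) ++ [c]) = B ((v ++ List.ofFn t) ++ [c']) := by
        rw [hβ c, hβ c', hcc]
      have h5 := B.injective h4
      simpa using h5
    obtain ⟨c₀, hc₀⟩ := (Finite.injective_iff_surjective.mp hβinj) a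
    have h6 := hkey c₀
    rw [hβ c₀, hc₀] at h6
    exact hhmoves t h6
  -- counting: some ε moves a child of at least half the words of length m extending v
  have hhalf : ∀ t : Fin (m - v.length) → Fin d,
      (Finset.univ : Finset ((Fin (m - v.length) → Fin d) → Bool)).card
        ≤ 2 * (Finset.univ.filter fun ε : (Fin (m - v.length) → Fin d) → Bool =>
        ∃ c : Fin d, P ε ((v ++ List.ofFn t) ++ [c]) ≠ (v ++ List.ofFn t) ++ [c]).card := by
    intro t
    have hbadgood : (Finset.univ.filter fun ε : (Fin (m - v.length) → Fin d) → Bool =>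
          ¬ ∃ c : Fin d, P ε ((v ++ List.ofFn t) ++ [c]) ≠ (v ++ List.ofFn t) ++ [c]).card
        ≤ (Finset.univ.filter fun ε : (Fin (m - v.length) → Fin d) → Bool =>
          ∃ c : Fin d, P ε ((v ++ List.ofFn t) ++ [c]) ≠ (v ++ List.ofFn t) ++ [c]).card := by
      apply Finset.card_le_card_of_injOn (fun ε => Function.update ε t (!ε t))
      · intro ε hε
        simp only [Finset.mem_coe, Finset.mem_filter, Finset.mem_univ, true_and] at hε ⊢
        by_contra hc
        apply hpair t ε
        · intro c
          by_contra hc2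
          exact hε ⟨c, hc2⟩
        · intro c
          by_contra hc2
          exact hc ⟨c, hc2⟩
      · intro ε₁ _ ε₂ _ hup
        funext s
        rcases eq_or_ne s t with rfl | hst
        · have h7 := congrFun hup s
          simp only [Function.update_self] at h7
          exact Bool.not_inj h7
        · have h7 := congrFun hup s
          simp only [Function.update_of_ne hst] at h7
          exact h7
    have hsplit := Finset.card_filter_add_card_filter_not
      (s := (Finset.univ : Finset ((Fin (m - v.length) → Fin d) → Bool)))
      (p := fun ε => ∃ c : Fin d, P ε ((v ++ List.ofFn t) ++ [c]) ≠ (v ++ List.ofFn t) ++ [c])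
    omega
  have hcardT : Fintype.card (Fin (m - v.length) → Fin d) = d ^ (m - v.length) := by
    simp [Fintype.card_fun]
  have hexε : ∃ ε : (Fin (m - v.length) → Fin d) → Bool,
      d ^ (m - v.length) ≤ 2 * (Finset.univ.filter fun t : Fin (m - v.length) → Fin d =>
        ∃ c : Fin d, P ε ((v ++ List.ofFn t) ++ [c]) ≠ (v ++ List.ofFn t) ++ [c]).card := by
    by_contra hc
    push_neg at hc
    have hswap : ∑ ε : (Fin (m - v.length) → Fin d) → Bool,
        (Finset.univ.filter fun t : Fin (m - v.length) → Fin d =>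
          ∃ c : Fin d, P ε ((v ++ List.ofFn t) ++ [c]) ≠ (v ++ List.ofFn t) ++ [c]).card
        = ∑ t : Fin (m - v.length) → Fin d,
          (Finset.univ.filter fun ε : (Fin (m - v.length) → Fin d) → Bool =>
            ∃ c : Fin d, P ε ((v ++ List.ofFn t) ++ [c]) ≠ (v ++ List.ofFn t) ++ [c]).card := by
      simp_rw [Finset.card_filter]
      rw [Finset.sum_comm]
    have hlt : 2 * (∑ ε : (Fin (m - v.length) → Fin d) → Bool,
        (Finset.univ.filter fun t : Fin (m - v.length) → Fin d =>
          ∃ c : Fin d, P ε ((v ++ List.ofFn t) ++ [c]) ≠ (v ++ List.ofFn t) ++ [c]).card)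
        < Fintype.card ((Fin (m - v.length) → Fin d) → Bool) * d ^ (m - v.length) := by
      rw [Finset.mul_sum]
      calc ∑ ε : (Fin (m - v.length) → Fin d) → Bool,
            2 * (Finset.univ.filter fun t : Fin (m - v.length) → Fin d =>
              ∃ c : Fin d, P ε ((v ++ List.ofFn t) ++ [c]) ≠ (v ++ List.ofFn t) ++ [c]).card
          < ∑ _ε : (Fin (m - v.length) → Fin d) → Bool, d ^ (m - v.length) :=
            Finset.sum_lt_sum_of_nonempty Finset.univ_nonempty fun ε _ => hc ε
        _ = Fintype.card ((Fin (m - v.length) → Fin d) → Bool) * d ^ (m - v.length) := by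
            rw [Finset.sum_const, Finset.card_univ, smul_eq_mul]
    have hge : Fintype.card ((Fin (m - v.length) → Fin d) → Bool) * d ^ (m - v.length)
        ≤ 2 * (∑ ε : (Fin (m - v.length) → Fin d) → Bool,
          (Finset.univ.filter fun t : Fin (m - v.length) → Fin d =>
            ∃ c : Fin d, P ε ((v ++ List.ofFn t) ++ [c]) ≠ (v ++ List.ofFn t) ++ [c]).card) := by
      rw [hswap, Finset.mul_sum]
      calc Fintype.card ((Fin (m - v.length) → Fin d) → Bool) * d ^ (m - v.length)
          = ∑ _t : Fin (m - v.length) → Fin d,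
            (Finset.univ : Finset ((Fin (m - v.length) → Fin d) → Bool)).card := by
            simp only [Finset.sum_const, Finset.card_univ, smul_eq_mul, hcardT, mul_comm]
        _ ≤ ∑ t : Fin (m - v.length) → Fin d,
            2 * (Finset.univ.filter fun ε : (Fin (m - v.length) → Fin d) → Bool =>
              ∃ c : Fin d, P ε ((v ++ List.ofFn t) ++ [c]) ≠ (v ++ List.ofFn t) ++ [c]).card :=
            Finset.sum_le_sum fun t _ => hhalf t
    exact absurd (hge.trans_lt hlt) (lt_irrefl _)
  obtain ⟨ε, hεcard⟩ := hexε
  refine ⟨P ε, hPG ε, supp_subset_cylinder hact (hPG ε) (hPrist ε), ?_⟩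
  set good := (Finset.univ.filter fun t : Fin (m - v.length) → Fin d =>
    ∃ c : Fin d, P ε ((v ++ List.ofFn t) ++ [c]) ≠ (v ++ List.ofFn t) ++ [c]) with hgooddef
  have hpick : ∀ t ∈ good, ∃ yy : Word d × Word d,
      yy.1 ≠ yy.2 ∧ (v ++ List.ofFn t) <+: yy.1 ∧ (v ++ List.ofFn t) <+: yy.2 ∧
      yy.1.length = m + 1 ∧ yy.2.length = m + 1 ∧
      P ε yy.1 ≠ yy.1 ∧ P ε yy.2 ≠ yy.2 := by
    intro t ht
    rw [hgooddef, Finset.mem_filter] at ht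
    obtain ⟨-, c, hc⟩ := ht
    have hplen2 : (v ++ List.ofFn t).length = m := by
      simp [List.length_append]
      omega
    have hfixp : P ε (v ++ List.ofFn t) = v ++ List.ofFn t := hPfix ε _ (le_of_eq hplen2)
    have hpre1 : (v ++ List.ofFn t) <+: (v ++ List.ofFn t) ++ [c] := List.prefix_append _ _
    have hpre2 : (v ++ List.ofFn t) <+: P ε ((v ++ List.ofFn t) ++ [c]) := by
      have h8 := ((hG _ (hPG ε)).2 (v ++ List.ofFn t) ((v ++ List.ofFn t) ++ [c])).mp hpre1
      rwa [hfixp] at h8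
    refine ⟨⟨(v ++ List.ofFn t) ++ [c], P ε ((v ++ List.ofFn t) ++ [c])⟩,
      fun h => hc h.symm, hpre1, hpre2, ?_, ?_, hc, ?_⟩
    · rw [List.length_append, hplen2]
      rfl
    · rw [(hG _ (hPG ε)).1, List.length_append, hplen2]
      rfl
    · intro h
      exact hc ((P ε).injective h)
  choose yy hyne hypre1 hypre2 hylen1 hylen2 hymov1 hymov2 using hpick
  have hsub : (⋃ t ∈ good.attach,
      (_root_.cylinder (yy t.1 t.2).1 ∪ _root_.cylinder (yy t.1 t.2).2))
      ⊆ suppSet act (P ε) := by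
    intro x hx
    simp only [Set.mem_iUnion, Set.mem_union] at hx
    obtain ⟨t, -, hx | hx⟩ := hx
    · exact moved_subset_supp hact (hPG ε) (hymov1 t.1 t.2) hx
    · exact moved_subset_supp hact (hPG ε) (hymov2 t.1 t.2) hx
  have hdisj : (↑good.attach : Set {x // x ∈ good}).PairwiseDisjoint
      (fun t : {x // x ∈ good} =>
        _root_.cylinder (yy t.1 t.2).1 ∪ _root_.cylinder (yy t.1 t.2).2) := by
    intro t _ t' _ htt'
    have hvne : (v ++ List.ofFn t.1) ≠ (v ++ List.ofFn t'.1) := by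
      intro h
      exact htt' (Subtype.ext (List.ofFn_inj.mp (List.append_cancel_left h)))
    refine Set.disjoint_of_subset
      (Set.union_subset (cylinder_mono (hypre1 t.1 t.2)) (cylinder_mono (hypre2 t.1 t.2)))
      (Set.union_subset (cylinder_mono (hypre1 t'.1 t'.2)) (cylinder_mono (hypre2 t'.1 t'.2)))
      (cylinder_disjoint (by simp) hvne)
  have hUeq := measure_biUnion_finset (μ := μ) hdisj
    (fun t _ => (measurableSet_cylinder _).union (measurableSet_cylinder _))
  have hμt : ∀ t ∈ good.attach,
      μ (_root_.cylinder (yy t.1 t.2).1 ∪ _root_.cylinder (yy t.1 t.2).2)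
        = 2 * ((d : ℝ≥0∞)⁻¹) ^ (m + 1) := by
    intro t _
    rw [measure_union (cylinder_disjoint ((hylen1 t.1 t.2).trans (hylen2 t.1 t.2).symm)
        (hyne t.1 t.2)) (measurableSet_cylinder _),
      hμ, hμ, hylen1 t.1 t.2, hylen2 t.1 t.2]
    ring
  have hdne0 : (d : ℝ≥0∞) ≠ 0 := by
    have : d ≠ 0 := by omega
    exact_mod_cast this
  calc (d : ℝ≥0∞)⁻¹ * μ (_root_.cylinder v)
      = ((d : ℝ≥0∞)⁻¹) ^ (v.length + 1) := by rw [hμ v, pow_succ, mul_comm]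
    _ = (d : ℝ≥0∞) ^ (m - v.length) * ((d : ℝ≥0∞)⁻¹) ^ (m + 1) := by
        have hdd : (d : ℝ≥0∞) * (d : ℝ≥0∞)⁻¹ = 1 :=
          ENNReal.mul_inv_cancel hdne0 (ENNReal.natCast_ne_top d)
        have hmsplit : m + 1 = (m - v.length) + (v.length + 1) := by omega
        have h9 : (d : ℝ≥0∞) ^ (m - v.length) * ((d : ℝ≥0∞)⁻¹) ^ (m + 1)
            = ((d : ℝ≥0∞)⁻¹) ^ (v.length + 1) := by
          rw [hmsplit, pow_add, ← mul_assoc, ← mul_pow, hdd, one_pow, one_mul]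
        exact h9.symm
    _ ≤ ((2 * good.card : ℕ) : ℝ≥0∞) * ((d : ℝ≥0∞)⁻¹) ^ (m + 1) := by
        apply mul_le_mul_left
        calc (d : ℝ≥0∞) ^ (m - v.length) = ((d ^ (m - v.length) : ℕ) : ℝ≥0∞) := by push_cast; ring
          _ ≤ ((2 * good.card : ℕ) : ℝ≥0∞) := Nat.cast_le.mpr hεcard
    _ = ∑ _t ∈ good.attach, (2 * ((d : ℝ≥0∞)⁻¹) ^ (m + 1)) := by
        rw [Finset.sum_const, Finset.card_attach, nsmul_eq_mul]
        push_cast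
        ring
    _ = ∑ t ∈ good.attach,
        μ (_root_.cylinder (yy t.1 t.2).1 ∪ _root_.cylinder (yy t.1 t.2).2) :=
        (Finset.sum_congr rfl fun t ht => (hμt t ht).symm)
    _ = μ (⋃ t ∈ good.attach,
        (_root_.cylinder (yy t.1 t.2).1 ∪ _root_.cylinder (yy t.1 t.2).2)) := hUeq.symm
    _ ≤ μ (suppSet act (P ε)) := measure_mono hsub
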